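/- Let Φ be positive-definite diagonal and Ω symmetric positive semi-definite with γ ≥ 0, and let θ̃^S = (I + γΦ⁻¹Ω)⁻¹ θ̂. Then the smoothness of the estimate does not exceed that of the input: (θ̃^S)ᵀ Ω θ̃^S ≤ θ̂ᵀ Ω θ̂. -/

import Mathlib

open Matrix BigOperators

theorem stmt18 {m : ℕ} (φ : Fin m → ℝ) (hφ : ∀ i, 0 < φ i)
    (Ω : Matrix (Fin m) (Fin m) ℝ) (hΩ : Ω.PosSemidef)
    (γ : ℝ) (hγ : 0 ≤ γ) (θ : Fin m → ℝ)
    (θS : Fin m → ℝ) (hθS : θS = (1 + γ • (Matrix.diagonal φ)⁻¹ * Ω)⁻¹ *ᵥ θ) :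
    θS ⬝ᵥ (Ω *ᵥ θS) ≤ θ ⬝ᵥ (Ω *ᵥ θ) := by
  set D : Matrix (Fin m) (Fin m) ℝ := Matrix.diagonal φ with hD
  set M : Matrix (Fin m) (Fin m) ℝ := 1 + γ • D⁻¹ * Ω with hM
  have hDpd : D.PosDef := Matrix.PosDef.diagonal hφ
  have hDdet : IsUnit D.det := hDpd.det_pos.ne'.isUnit
  have hγΩ : (γ • Ω).PosSemidef := by
    refine Matrix.PosSemidef.of_dotProduct_mulVec_nonneg ?_ fun x => ?_
    · unfold Matrix.IsHermitian
      rw [Matrix.conjTranspose_smul, hΩ.1]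
      simp
    · rw [Matrix.smul_mulVec, dotProduct_smul]
      exact mul_nonneg hγ (hΩ.dotProduct_mulVec_nonneg x)
  have hsum : (D + γ • Ω).PosDef := hDpd.add_posSemidef hγΩ
  have hDM : D * M = D + γ • Ω := by
    rw [hM, Matrix.mul_add, Matrix.mul_one, Matrix.smul_mul, mul_smul_comm,
      ← Matrix.mul_assoc, Matrix.mul_nonsing_inv D hDdet, Matrix.one_mul]
  have hMdet : IsUnit M.det := by
    have h1 : D.det * M.det = (D + γ • Ω).det := by rw [← Matrix.det_mul, hDM]
    have h2 : (D + γ • Ω).det ≠ 0 := hsum.det_pos.ne'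
    refine isUnit_iff_ne_zero.mpr fun h => h2 ?_
    rw [← h1, h, mul_zero]
  have hMθ : M *ᵥ θS = θ := by
    rw [hθS, Matrix.mulVec_mulVec, Matrix.mul_nonsing_inv M hMdet, Matrix.one_mulVec]
  -- decompose θ
  set u : Fin m → ℝ := Ω *ᵥ θS with hu
  set w : Fin m → ℝ := D⁻¹ *ᵥ u with hw
  have hθ : θ = θS + γ • w := by
    rw [← hMθ, hM, Matrix.add_mulVec, Matrix.one_mulVec, Matrix.smul_mul,
      Matrix.smul_mulVec, ← Matrix.mulVec_mulVec]
  -- symmetry of Ω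
  have hΩt : Ωᵀ = Ω := by
    have := hΩ.1
    rwa [Matrix.IsHermitian, Matrix.conjTranspose_eq_transpose_of_trivial] at this
  have hsym : ∀ x y : Fin m → ℝ, x ⬝ᵥ (Ω *ᵥ y) = y ⬝ᵥ (Ω *ᵥ x) := by
    intro x y
    rw [Matrix.dotProduct_mulVec, ← Matrix.mulVec_transpose, hΩt, dotProduct_comm]
  -- w ⬝ᵥ u ≥ 0
  have hDinv : D⁻¹ = Matrix.diagonal fun i => (φ i)⁻¹ := by
    apply Matrix.inv_eq_right_inv
    rw [hD, Matrix.diagonal_mul_diagonal,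
      show (fun i => φ i * (φ i)⁻¹) = fun _ => (1:ℝ) from
        funext fun i => mul_inv_cancel₀ (hφ i).ne', Matrix.diagonal_one]
  have hwu : 0 ≤ w ⬝ᵥ u := by
    rw [hw, hDinv, dotProduct]
    refine Finset.sum_nonneg fun i _ => ?_
    rw [Matrix.mulVec_diagonal]
    have : (0:ℝ) ≤ (φ i)⁻¹ := (inv_pos.mpr (hφ i)).le
    nlinarith [sq_nonneg (u i)]
  have hwΩw : 0 ≤ w ⬝ᵥ (Ω *ᵥ w) := by simpa using hΩ.dotProduct_mulVec_nonneg w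
  -- expand
  have hexp : θ ⬝ᵥ (Ω *ᵥ θ)
      = θS ⬝ᵥ u + γ * (w ⬝ᵥ u) + γ * (w ⬝ᵥ u) + γ * (γ * (w ⬝ᵥ (Ω *ᵥ w))) := by
    have h1 : θS ⬝ᵥ (Ω *ᵥ w) = w ⬝ᵥ u := by rw [hsym, ← hu]
    have h2 : w ⬝ᵥ (Ω *ᵥ θS) = w ⬝ᵥ u := by rw [← hu]
    simp only [hθ, Matrix.mulVec_add, Matrix.mulVec_smul, add_dotProduct,
      dotProduct_add, smul_dotProduct, dotProduct_smul,
      smul_eq_mul, ← hu, h1, h2]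
    ring
  rw [hexp, hu]
  nlinarith [mul_nonneg hγ hwu, mul_nonneg hγ (mul_nonneg hγ hwΩw)]
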